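/- arXiv:2506.06044 — 4 statements merged into one kernel-verified Lean document; each statement's English description precedes it below -/
import Mathlib

section
/- Let G be a simple graph on a vertex type V, let v ∈ V, let N₁ and N₂ be disjoint sets with N₁ ∪ N₂ = N_G(v), and let G' be the exclusive-split graph of G at v determined by (N₁, N₂). If a vertex u ∈ V with u ≠ v is a claw center in G, then inl u is a claw center in G'. In particular, splitting a vertex other than the center of an induced claw cannot destroy that claw: G' still contains an induced claw centered at inl u. -/
/-- A vertex `u` of `H` is a claw center if it has three distinct pairwise
non-adjacent neighbors. -/
def IsClawCenter {W : Type*} (H : SimpleGraph W) (u : W) : Prop :=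
  ∃ a b c : W, a ≠ b ∧ a ≠ c ∧ b ≠ c ∧
    H.Adj u a ∧ H.Adj u b ∧ H.Adj u c ∧
    ¬ H.Adj a b ∧ ¬ H.Adj a c ∧ ¬ H.Adj b c

/-- The exclusive-split graph of `G` at `v` determined by `(N₁, N₂)`: the graph
on `V ⊕ Unit` where `Sum.inl v` plays the role of the copy `v₁` (adjacent to
`N₁`) and `Sum.inr ()` the role of the copy `v₂` (adjacent to `N₂`), and all
other adjacencies among vertices different from `v` are as in `G`. -/
def splitGraph {V : Type*} (G : SimpleGraph V) (v : V) (N₁ N₂ : Set V) :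
    SimpleGraph (V ⊕ Unit) where
  Adj x y :=
    match x, y with
    | Sum.inl u, Sum.inl w =>
        (u ≠ v ∧ w ≠ v ∧ G.Adj u w) ∨ (u = v ∧ w ≠ v ∧ w ∈ N₁) ∨
          (u ≠ v ∧ w = v ∧ u ∈ N₁)
    | Sum.inl u, Sum.inr _ => u ≠ v ∧ u ∈ N₂
    | Sum.inr _, Sum.inl u => u ≠ v ∧ u ∈ N₂
    | Sum.inr _, Sum.inr _ => False
  symm := by
    constructor
    rintro (u | u) (w | w) h
    · rcases h with ⟨h1, h2, h3⟩ | ⟨h1, h2, h3⟩ | ⟨h1, h2, h3⟩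
      · exact Or.inl ⟨h2, h1, h3.symm⟩
      · exact Or.inr (Or.inr ⟨h2, h1, h3⟩)
      · exact Or.inr (Or.inl ⟨h2, h1, h3⟩)
    · exact h
    · exact h
    · exact h.elim
  loopless := by
    constructor
    rintro (u | u) h
    · rcases h with ⟨h1, h2, h3⟩ | ⟨h1, h2, h3⟩ | ⟨h1, h2, h3⟩
      · exact G.irrefl h3
      · exact h2 h1
      · exact h1 h2
    · exact h

lemma splitGraph_aux {V : Type*} (G : SimpleGraph V)
    (v : V) (N₁ N₂ : Set V)
    (hunion : N₁ ∪ N₂ = G.neighborSet v)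
    (u : V) (huv : u ≠ v) (a b c : V)
    (hab : a ≠ b) (hac : a ≠ c) (hbc : b ≠ c)
    (hua : G.Adj u a) (hub : G.Adj u b) (huc : G.Adj u c)
    (nab : ¬ G.Adj a b) (nac : ¬ G.Adj a c) (nbc : ¬ G.Adj b c)
    (hav : a ≠ v) (hbv : b ≠ v) :
    IsClawCenter (splitGraph G v N₁ N₂) (Sum.inl u) := by
  have adj_inl : ∀ w : V, w ≠ v → G.Adj u w →
      (splitGraph G v N₁ N₂).Adj (Sum.inl u) (Sum.inl w) := by
    intro w hw h
    exact Or.inl ⟨huv, hw, h⟩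
  have nadj_inl : ∀ x y : V, x ≠ v → y ≠ v → ¬ G.Adj x y →
      ¬ (splitGraph G v N₁ N₂).Adj (Sum.inl x) (Sum.inl y) := by
    rintro x y hx hy h (⟨_, _, h3⟩ | ⟨h1, _, _⟩ | ⟨_, h2, _⟩)
    · exact h h3
    · exact hx h1
    · exact hy h2
  by_cases hcv : c = v
  · rw [hcv] at hac hbc huc nac nbc
    have hmem : u ∈ N₁ ∪ N₂ := by rw [hunion]; exact G.adj_symm huc
    rcases hmem with h1 | h2
    · refine ⟨Sum.inl a, Sum.inl b, Sum.inl v, by simp [hab], by simp [hac],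
        by simp [hbc], adj_inl a hav hua, adj_inl b hbv hub,
        Or.inr (Or.inr ⟨huv, rfl, h1⟩), nadj_inl a b hav hbv nab, ?_, ?_⟩
      · rintro (⟨_, h2, _⟩ | ⟨h1, _, _⟩ | ⟨_, _, hm⟩)
        · exact h2 rfl
        · exact hav h1
        · have : a ∈ G.neighborSet v := by rw [← hunion]; exact Or.inl hm
          exact nac (G.adj_symm this)
      · rintro (⟨_, h2, _⟩ | ⟨h1, _, _⟩ | ⟨_, _, hm⟩)
        · exact h2 rfl
        · exact hbv h1
        · have : b ∈ G.neighborSet v := by rw [← hunion]; exact Or.inl hm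
          exact nbc (G.adj_symm this)
    · refine ⟨Sum.inl a, Sum.inl b, Sum.inr (), by simp [hab], by simp,
        by simp, adj_inl a hav hua, adj_inl b hbv hub,
        ⟨huv, h2⟩, nadj_inl a b hav hbv nab, ?_, ?_⟩
      · rintro ⟨_, hm⟩
        have : a ∈ G.neighborSet v := by rw [← hunion]; exact Or.inr hm
        exact nac (G.adj_symm this)
      · rintro ⟨_, hm⟩
        have : b ∈ G.neighborSet v := by rw [← hunion]; exact Or.inr hm
        exact nbc (G.adj_symm this)
  · exact ⟨Sum.inl a, Sum.inl b, Sum.inl c, by simp [hab], by simp [hac],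
      by simp [hbc], adj_inl a hav hua, adj_inl b hbv hub, adj_inl c hcv huc,
      nadj_inl a b hav hbv nab, nadj_inl a c hav hcv nac,
      nadj_inl b c hbv hcv nbc⟩

/-- Splitting a vertex `v` cannot destroy a claw centered at another vertex
`u ≠ v`: if `u` is a claw center in `G`, then `Sum.inl u` is a claw center in
the exclusive-split graph of `G` at `v`. -/
theorem split_preserves_other_claw_centers {V : Type*} (G : SimpleGraph V)
    (v : V) (N₁ N₂ : Set V)
    (hdisj : Disjoint N₁ N₂) (hunion : N₁ ∪ N₂ = G.neighborSet v)
    (u : V) (huv : u ≠ v) (hu : IsClawCenter G u) :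
    IsClawCenter (splitGraph G v N₁ N₂) (Sum.inl u) := by

  obtain ⟨a, b, c, hab, hac, hbc, hua, hub, huc, nab, nac, nbc⟩ := hu
  by_cases hav : a = v
  · subst hav
    exact splitGraph_aux G a N₁ N₂ hunion u huv b c a hbc hab.symm hac.symm
      hub huc hua (fun h => nbc h) (fun h => nab h.symm) (fun h => nac h.symm)
      hab.symm hac.symm
  · by_cases hbv : b = v
    · subst hbv
      exact splitGraph_aux G b N₁ N₂ hunion u huv a c b hac hab hbc.symm
        hua huc hub nac nab (fun h => nbc h.symm) hav hbc.symm
    · exact splitGraph_aux G v N₁ N₂ hunion u huv a b c hab hac hbc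
        hua hub huc nab nac nbc hav hbv
end

section
/- Let G be a simple graph and let v be a vertex of degree exactly 4 such that the induced subgraph G[N(v)] on the four neighbors of v is disconnected (has at least two connected components). Then there exist nonempty disjoint sets N₁, N₂ with N₁ ∪ N₂ = N(v) such that: (1) the partition respects the connected components of G[N(v)] (any two neighbors of v in the same connected component of G[N(v)] lie in the same part), and (2) neither N₁ nor N₂ contains three distinct pairwise non-adjacent vertices of G. -/
/-- If `v` has degree exactly 4 and the induced subgraph `G[N(v)]` is
disconnected, then there is a partition of `N(v)` into two nonempty parts
`N₁, N₂` that respects the connected components of `G[N(v)]` and such that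
neither part contains three distinct pairwise non-adjacent vertices of `G`. -/
theorem degree_four_good_split_exists {V : Type*} (G : SimpleGraph V) (v : V)
    (hdeg : (G.neighborSet v).ncard = 4)
    (hdisc : ¬ (G.induce (G.neighborSet v)).Connected) :
    ∃ N₁ N₂ : Set V, N₁.Nonempty ∧ N₂.Nonempty ∧ Disjoint N₁ N₂ ∧
      N₁ ∪ N₂ = G.neighborSet v ∧
      (∀ a b : ↥(G.neighborSet v),
        (G.induce (G.neighborSet v)).Reachable a b → ((a : V) ∈ N₁ ↔ (b : V) ∈ N₁)) ∧
      ¬ (∃ a b c : V, a ∈ N₁ ∧ b ∈ N₁ ∧ c ∈ N₁ ∧ a ≠ b ∧ a ≠ c ∧ b ≠ c ∧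
          ¬ G.Adj a b ∧ ¬ G.Adj a c ∧ ¬ G.Adj b c) ∧
      ¬ (∃ a b c : V, a ∈ N₂ ∧ b ∈ N₂ ∧ c ∈ N₂ ∧ a ≠ b ∧ a ≠ c ∧ b ≠ c ∧
          ¬ G.Adj a b ∧ ¬ G.Adj a c ∧ ¬ G.Adj b c) := by
  set s := G.neighborSet v with hs
  have hfin : s.Finite := by
    by_contra h
    rw [Set.Infinite.ncard h] at hdeg
    omega
  by_cases hadj : ∃ a ∈ s, ∃ b ∈ s, G.Adj a b
  · -- Case B: some two neighbors are adjacent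
    obtain ⟨a, ha, b, hb, hab⟩ := hadj
    set a₀ : ↥s := ⟨a, ha⟩ with ha₀
    set N₁ : Set V := Subtype.val '' {x : ↥s | (G.induce s).Reachable a₀ x} with hN₁
    set N₂ : Set V := s \ N₁ with hN₂
    have hmem : ∀ x : ↥s, (x : V) ∈ N₁ ↔ (G.induce s).Reachable a₀ x := by
      intro x
      constructor
      · rintro ⟨y, hy, hyx⟩
        rwa [show y = x from Subtype.ext hyx] at hy
      · intro h; exact ⟨x, h, rfl⟩
    have hN₁sub : N₁ ⊆ s := by rintro _ ⟨y, _, rfl⟩; exact y.2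
    have hab' : (G.induce s).Adj a₀ ⟨b, hb⟩ := hab
    have ha₁ : a ∈ N₁ := (hmem a₀).mpr (SimpleGraph.Reachable.refl _)
    have hb₁ : b ∈ N₁ := (hmem ⟨b, hb⟩).mpr hab'.reachable
    have hN₂ne : N₂.Nonempty := by
      by_contra h
      rw [Set.not_nonempty_iff_eq_empty, Set.diff_eq_empty] at h
      apply hdisc
      have : Nonempty ↥s := ⟨a₀⟩
      exact ⟨fun x y => ((hmem x).mp (h x.2)).symm.trans ((hmem y).mp (h y.2))⟩
    have hN₁fin : N₁.Finite := hfin.subset hN₁sub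
    have hN₂fin : N₂.Finite := hfin.subset Set.diff_subset
    have hdisj : Disjoint N₁ N₂ := Set.disjoint_sdiff_right
    have hunion : N₁ ∪ N₂ = s := Set.union_diff_cancel hN₁sub
    have hcard : N₁.ncard + N₂.ncard = 4 := by
      rw [← Set.ncard_union_eq hdisj hN₁fin hN₂fin, hunion, hdeg]
    have h2le : 2 ≤ N₁.ncard := by
      have := (Set.one_lt_ncard hN₁fin).mpr ⟨a, ha₁, b, hb₁, hab.ne⟩
      omega
    have hN₂pos : 0 < N₂.ncard := (Set.ncard_pos hN₂fin).mpr hN₂ne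
    refine ⟨N₁, N₂, ⟨a, ha₁⟩, hN₂ne, hdisj, hunion, ?_, ?_, ?_⟩
    · intro p q hr
      rw [hmem p, hmem q]
      exact ⟨fun h => h.trans hr, fun h => h.trans hr.symm⟩
    · rintro ⟨x, y, z, hx, hy, hz, hxy, hxz, hyz, nxy, nxz, nyz⟩
      have hsub : ({x, y, z} : Set V) ⊆ N₁ := by
        rintro w (rfl | rfl | rfl) <;> assumption
      have h3 : ({x, y, z} : Set V).ncard = 3 :=
        Set.ncard_eq_three.mpr ⟨x, y, z, hxy, hxz, hyz, rfl⟩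
      have heq : ({x, y, z} : Set V) = N₁ :=
        Set.eq_of_subset_of_ncard_le hsub (by omega) hN₁fin
      rw [← heq] at ha₁ hb₁
      simp only [Set.mem_insert_iff, Set.mem_singleton_iff] at ha₁ hb₁
      rcases ha₁ with rfl | rfl | rfl <;> rcases hb₁ with rfl | rfl | rfl <;>
        first
          | exact G.irrefl hab
          | exact nxy hab | exact nxy hab.symm
          | exact nxz hab | exact nxz hab.symm
          | exact nyz hab | exact nyz hab.symm
    · rintro ⟨x, y, z, hx, hy, hz, hxy, hxz, hyz, -, -, -⟩
      have hsub : ({x, y, z} : Set V) ⊆ N₂ := by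
        rintro w (rfl | rfl | rfl) <;> assumption
      have h3 : ({x, y, z} : Set V).ncard = 3 :=
        Set.ncard_eq_three.mpr ⟨x, y, z, hxy, hxz, hyz, rfl⟩
      have := Set.ncard_le_ncard hsub hN₂fin
      omega
  · -- Case A: no two neighbors adjacent
    push_neg at hadj
    have h2 : 1 < s.ncard := by omega
    obtain ⟨x, hx, y, hy, hxy⟩ := (Set.one_lt_ncard hfin).mp h2
    set N₁ : Set V := {x, y} with hN₁
    set N₂ : Set V := s \ N₁ with hN₂
    have hN₁sub : N₁ ⊆ s := by
      rintro w (rfl | rfl) <;> assumption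
    have hN₁fin : N₁.Finite := hfin.subset hN₁sub
    have hN₂fin : N₂.Finite := hfin.subset Set.diff_subset
    have hdisj : Disjoint N₁ N₂ := Set.disjoint_sdiff_right
    have hunion : N₁ ∪ N₂ = s := Set.union_diff_cancel hN₁sub
    have hc1 : N₁.ncard = 2 := Set.ncard_pair hxy
    have hcard : N₁.ncard + N₂.ncard = 4 := by
      rw [← Set.ncard_union_eq hdisj hN₁fin hN₂fin, hunion, hdeg]
    have hN₂ne : N₂.Nonempty := by
      rw [← Set.ncard_pos hN₂fin]
      omega
    have hreq : ∀ p q : ↥s, (G.induce s).Reachable p q → p = q := by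
      intro p q hpq
      obtain ⟨w⟩ := hpq
      cases w with
      | nil => rfl
      | cons h _ => exact absurd h (hadj _ p.2 _ (Subtype.coe_prop _))
    refine ⟨N₁, N₂, ⟨x, Or.inl rfl⟩, hN₂ne, hdisj, hunion, ?_, ?_, ?_⟩
    · intro p q hr
      rw [hreq p q hr]
    · rintro ⟨a', b', c', ha', hb', hc', hab', hac', hbc', -, -, -⟩
      have hsub : ({a', b', c'} : Set V) ⊆ N₁ := by
        rintro w (rfl | rfl | rfl) <;> assumption
      have h3 : ({a', b', c'} : Set V).ncard = 3 :=
        Set.ncard_eq_three.mpr ⟨a', b', c', hab', hac', hbc', rfl⟩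
      have := Set.ncard_le_ncard hsub hN₁fin
      omega
    · rintro ⟨a', b', c', ha', hb', hc', hab', hac', hbc', -, -, -⟩
      have hsub : ({a', b', c'} : Set V) ⊆ N₂ := by
        rintro w (rfl | rfl | rfl) <;> assumption
      have h3 : ({a', b', c'} : Set V).ncard = 3 :=
        Set.ncard_eq_three.mpr ⟨a', b', c', hab', hac', hbc', rfl⟩
      have := Set.ncard_le_ncard hsub hN₂fin
      omega
end

section
/- Let G be a finite simple graph on a vertex set V, let k be a natural number, and let C ⊆ V be a set of vertices (the claw centers) satisfying: (1) |C| ≤ k; (2) every vertex of V lies in the closed neighborhood N[c] of some c ∈ C; and (3) for every c ∈ C, the neighborhood N(c) can be covered by at most 2(k+1) cliques of G, each of which contains at most k vertices not belonging to C. Then |V| ≤ 2k³ + 2k² + k. -/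
/-- Kernel size bound for Claw-Free Vertex Splitting: if `C` is a set of at
most `k` vertices (the claw centers) such that every vertex lies in the closed
neighborhood of some member of `C`, and for every `c ∈ C` the neighborhood
`N(c)` is covered by at most `2(k+1)` cliques each containing at most `k`
vertices outside `C`, then the graph has at most `2k³ + 2k² + k` vertices. -/
theorem cfvs_kernel_size_bound {V : Type*} [Fintype V] (G : SimpleGraph V)
    (k : ℕ) (C : Finset V)
    (h1 : C.card ≤ k)
    (h2 : ∀ u : V, ∃ c ∈ C, u = c ∨ G.Adj c u)
    (h3 : ∀ c ∈ C, ∃ (m : ℕ) (S : Fin m → Set V), m ≤ 2 * (k + 1) ∧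
      (∀ i, G.IsClique (S i)) ∧ G.neighborSet c ⊆ ⋃ i, S i ∧
      ∀ i, (S i \ (C : Set V)).ncard ≤ k) :
    Fintype.card V ≤ 2 * k ^ 3 + 2 * k ^ 2 + k := by
  classical
  have key : ∀ c : V, ∃ T : Finset V,
      (c ∈ C → ∀ u, G.Adj c u → u ∉ C → u ∈ T) ∧ T.card ≤ 2 * (k + 1) * k := by
    intro c
    by_cases hc : c ∈ C
    · obtain ⟨m, S, hm, _, hcov, hcard⟩ := h3 c hc
      refine ⟨Finset.univ.biUnion (fun i : Fin m => (S i \ (C : Set V)).toFinset),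
        ?_, ?_⟩
      · intro _ u hu huC
        have : u ∈ ⋃ i, S i := hcov hu
        obtain ⟨i, hi⟩ := Set.mem_iUnion.mp this
        exact Finset.mem_biUnion.mpr ⟨i, Finset.mem_univ i,
          Set.mem_toFinset.mpr ⟨hi, huC⟩⟩
      · calc _ ≤ ∑ i : Fin m, ((S i \ (C : Set V)).toFinset).card :=
              Finset.card_biUnion_le
          _ ≤ ∑ _i : Fin m, k := by
              refine Finset.sum_le_sum fun i _ => ?_
              have := hcard i
              rwa [Set.ncard_eq_toFinset_card'] at this
          _ = m * k := by simp [Finset.sum_const, Fintype.card_fin, mul_comm]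
          _ ≤ 2 * (k + 1) * k := Nat.mul_le_mul_right k hm
    · exact ⟨∅, fun h => absurd h hc, Nat.zero_le _⟩
  choose T hT hTcard using key
  have hsub : (Finset.univ : Finset V) ⊆ C ∪ C.biUnion T := by
    intro u _
    obtain ⟨c, hc, h⟩ := h2 u
    by_cases huC : u ∈ C
    · exact Finset.mem_union_left _ huC
    · rcases h with rfl | hadj
      · exact absurd hc huC
      · exact Finset.mem_union_right _ (Finset.mem_biUnion.mpr
          ⟨c, hc, hT c hc u hadj huC⟩)
  have := Finset.card_le_card hsub
  rw [Finset.card_univ] at this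
  calc Fintype.card V ≤ (C ∪ C.biUnion T).card := this
    _ ≤ C.card + (C.biUnion T).card := Finset.card_union_le _ _
    _ ≤ k + ∑ c ∈ C, (T c).card := by
        exact Nat.add_le_add h1 Finset.card_biUnion_le
    _ ≤ k + ∑ _c ∈ C, 2 * (k + 1) * k := by
        exact Nat.add_le_add_left (Finset.sum_le_sum fun c _ => hTcard c) _
    _ = k + C.card * (2 * (k + 1) * k) := by rw [Finset.sum_const, smul_eq_mul]
    _ ≤ k + k * (2 * (k + 1) * k) := by
        exact Nat.add_le_add_left (Nat.mul_le_mul_right _ h1) _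
    _ = 2 * k ^ 3 + 2 * k ^ 2 + k := by ring
end

section
/- Let c ≥ 1, let G be a finite simple graph on a vertex set V, let k be a natural number, and let C ⊆ V be a set of vertices satisfying: (1) |C| ≤ k; (2) every vertex of V lies in the closed neighborhood N[w] of some w ∈ C; and (3) for every w ∈ C, the neighborhood N(w) can be covered by at most (c−1)(k+1) cliques of G, each of which contains at most k vertices not belonging to C. Then |V| ≤ (c−1)k³ + (c−1)k² + k. -/
/-- Kernel size bound for `K_{1,c}`-Free Vertex Splitting: if `C` is a set of
at most `k` vertices such that every vertex lies in the closed neighborhood of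
some member of `C`, and for every `w ∈ C` the neighborhood `N(w)` is covered by
at most `(c−1)(k+1)` cliques each containing at most `k` vertices outside `C`,
then the graph has at most `(c−1)k³ + (c−1)k² + k` vertices. -/
theorem k1c_kernel_size_bound {V : Type*} [Fintype V] (G : SimpleGraph V)
    (c : ℕ) (hc : 1 ≤ c) (k : ℕ) (C : Finset V)
    (h1 : C.card ≤ k)
    (h2 : ∀ u : V, ∃ w ∈ C, u = w ∨ G.Adj w u)
    (h3 : ∀ w ∈ C, ∃ (m : ℕ) (S : Fin m → Set V), m ≤ (c - 1) * (k + 1) ∧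
      (∀ i, G.IsClique (S i)) ∧ G.neighborSet w ⊆ ⋃ i, S i ∧
      ∀ i, (S i \ (C : Set V)).ncard ≤ k) :
    Fintype.card V ≤ (c - 1) * k ^ 3 + (c - 1) * k ^ 2 + k := by
  classical
  -- For each w ∈ C, the vertices adjacent to w outside C number at most (c-1)*(k+1)*k
  have key : ∀ w ∈ C, (Finset.univ.filter (fun u => u ∉ C ∧ G.Adj w u)).card ≤
      (c - 1) * (k + 1) * k := by
    intro w hw
    obtain ⟨m, S, hm, _, hcov, hk⟩ := h3 w hw
    have hsub : (Finset.univ.filter (fun u => u ∉ C ∧ G.Adj w u)) ⊆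
        Finset.univ.biUnion (fun i : Fin m => (S i \ (C : Set V)).toFinset) := by
      intro u hu
      simp only [Finset.mem_filter, Finset.mem_univ, true_and] at hu
      obtain ⟨huC, hadj⟩ := hu
      have : u ∈ ⋃ i, S i := hcov hadj
      obtain ⟨i, hi⟩ := Set.mem_iUnion.mp this
      exact Finset.mem_biUnion.mpr ⟨i, Finset.mem_univ i,
        Set.mem_toFinset.mpr ⟨hi, huC⟩⟩
    calc (Finset.univ.filter (fun u => u ∉ C ∧ G.Adj w u)).card
        ≤ (Finset.univ.biUnion (fun i : Fin m => (S i \ (C : Set V)).toFinset)).card :=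
          Finset.card_le_card hsub
      _ ≤ ∑ i : Fin m, (S i \ (C : Set V)).toFinset.card := Finset.card_biUnion_le
      _ ≤ ∑ _i : Fin m, k := by
          apply Finset.sum_le_sum
          intro i _
          rw [← Set.ncard_eq_toFinset_card']
          exact hk i
      _ = m * k := by simp [Finset.sum_const, mul_comm]
      _ ≤ (c - 1) * (k + 1) * k := Nat.mul_le_mul_right k hm
  -- Every vertex is in C or in one of these sets
  have hcover : (Finset.univ : Finset V) ⊆
      C ∪ C.biUnion (fun w => Finset.univ.filter (fun u => u ∉ C ∧ G.Adj w u)) := by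
    intro u _
    by_cases huC : u ∈ C
    · exact Finset.mem_union_left _ huC
    · obtain ⟨w, hw, heq⟩ := h2 u
      rcases heq with rfl | hadj
      · exact absurd hw huC
      · exact Finset.mem_union_right _ (Finset.mem_biUnion.mpr
          ⟨w, hw, Finset.mem_filter.mpr ⟨Finset.mem_univ u, huC, hadj⟩⟩)
  calc Fintype.card V
      = (Finset.univ : Finset V).card := rfl
    _ ≤ (C ∪ C.biUnion (fun w => Finset.univ.filter (fun u => u ∉ C ∧ G.Adj w u))).card :=
        Finset.card_le_card hcover
    _ ≤ C.card + (C.biUnion (fun w => Finset.univ.filter (fun u => u ∉ C ∧ G.Adj w u))).card :=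
        Finset.card_union_le _ _
    _ ≤ C.card + ∑ w ∈ C, (Finset.univ.filter (fun u => u ∉ C ∧ G.Adj w u)).card :=
        Nat.add_le_add_left Finset.card_biUnion_le _
    _ ≤ k + ∑ _w ∈ C, (c - 1) * (k + 1) * k := by
        exact Nat.add_le_add h1 (Finset.sum_le_sum key)
    _ = k + C.card * ((c - 1) * (k + 1) * k) := by rw [Finset.sum_const, smul_eq_mul]
    _ ≤ k + k * ((c - 1) * (k + 1) * k) :=
        Nat.add_le_add_left (Nat.mul_le_mul_right _ h1) k
    _ = (c - 1) * k ^ 3 + (c - 1) * k ^ 2 + k := by ring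
end
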